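/- Fix an integer n ≥ 1, let a_1, …, a_n be real numbers and set a_0 = a_{n+1} = 0. Then for all integers 0 ≤ j, j′ ≤ n: Σ_{y=0}^n ψ_j(y)ψ_{j′}(y)·(a_y + a_{y+1}) − Σ_{y=1}^n [ ψ_j(y−1)ψ_{j′}(y) + ψ_j(y)ψ_{j′}(y−1) ]·a_y = γ_j·γ_{j′}·Σ_{y=1}^n φ_j(y)φ_{j′}(y)·a_y. -/
import Mathlib


open Real

noncomputable section

/-- Discrete Neumann eigenfunctions
`ψ_j(x) = ((2 − δ_{0,j})/(n+1))^{1/2} cos(πj(2x+1)/(2(n+1)))`. -/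
def psiN (n j x : ℕ) : ℝ :=
  Real.sqrt ((2 - (if j = 0 then (1:ℝ) else 0)) / ((n : ℝ) + 1))
    * Real.cos (Real.pi * (j : ℝ) * (2 * (x : ℝ) + 1) / (2 * ((n : ℝ) + 1)))

/-- Discrete Dirichlet eigenfunctions `φ_j(x) = (2/(n+1))^{1/2} sin(πjx/(n+1))`. -/
def phiD (n j x : ℕ) : ℝ :=
  Real.sqrt (2 / ((n : ℝ) + 1)) * Real.sin (Real.pi * (j : ℝ) * (x : ℝ) / ((n : ℝ) + 1))

/-- `γ_j = 2 sin(πj/(2(n+1)))`. -/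
def gam (n j : ℕ) : ℝ := 2 * Real.sin (Real.pi * (j : ℝ) / (2 * ((n : ℝ) + 1)))

lemma psi_diff (n j x : ℕ) :
    psiN n j (x+1) - psiN n j x = - gam n j * phiD n j (x+1) := by
  rcases eq_or_ne j 0 with hj | hj
  · simp [psiN, gam, phiD, hj]
  · unfold psiN gam phiD
    rw [if_neg hj]
    push_cast
    rw [← mul_sub, Real.cos_sub_cos]
    have hne : ((n:ℝ)+1) ≠ 0 := by positivity
    have h1 : (Real.pi * j * (2*((x:ℝ)+1)+1)/(2*((n:ℝ)+1)) + Real.pi * j * (2*(x:ℝ)+1)/(2*((n:ℝ)+1)))/2 = Real.pi * j * ((x:ℝ)+1)/((n:ℝ)+1) := by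
      field_simp; ring
    have h2 : (Real.pi * j * (2*((x:ℝ)+1)+1)/(2*((n:ℝ)+1)) - Real.pi * j * (2*(x:ℝ)+1)/(2*((n:ℝ)+1)))/2 = Real.pi * j /(2*((n:ℝ)+1)) := by
      field_simp; ring
    rw [h1, h2]
    ring

/-- The discrete identity connecting the Neumann basis `ψ` and the
Dirichlet basis `φ`, for a sequence `a` vanishing at `0` and `n+1`. -/
theorem psi_phi_quadratic_identity (n : ℕ) (hn : 1 ≤ n) (a : ℕ → ℝ)
    (ha0 : a 0 = 0) (han : a (n + 1) = 0)
    (j j' : ℕ) (hj : j ≤ n) (hj' : j' ≤ n) :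
    (∑ y ∈ Finset.range (n + 1), psiN n j y * psiN n j' y * (a y + a (y + 1)))
      - (∑ y ∈ Finset.Icc 1 n,
          (psiN n j (y - 1) * psiN n j' y + psiN n j y * psiN n j' (y - 1)) * a y)
      = gam n j * gam n j' * ∑ y ∈ Finset.Icc 1 n, phiD n j y * phiD n j' y * a y := by
  have e1 : (∑ y ∈ Finset.range (n + 1), psiN n j y * psiN n j' y * (a y + a (y + 1)))
      = ∑ x ∈ Finset.range n,
        (psiN n j (x+1) * psiN n j' (x+1) + psiN n j x * psiN n j' x) * a (x+1) := by
    simp only [mul_add, Finset.sum_add_distrib]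
    rw [Finset.sum_range_succ' (fun y => psiN n j y * psiN n j' y * a y) n,
        Finset.sum_range_succ (fun y => psiN n j y * psiN n j' y * a (y+1)) n]
    simp only [ha0, han, mul_zero, add_zero]
    rw [← Finset.sum_add_distrib]
    exact Finset.sum_congr rfl fun x _ => by ring
  have e2 : (∑ y ∈ Finset.Icc 1 n,
          (psiN n j (y - 1) * psiN n j' y + psiN n j y * psiN n j' (y - 1)) * a y)
      = ∑ x ∈ Finset.range n,
        (psiN n j x * psiN n j' (x+1) + psiN n j (x+1) * psiN n j' x) * a (x+1) := by
    rw [show Finset.Icc 1 n = Finset.Ico 1 (n+1) from rfl, Finset.sum_Ico_eq_sum_range]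
    simp [add_comm 1]
  have e3 : (∑ y ∈ Finset.Icc 1 n, phiD n j y * phiD n j' y * a y)
      = ∑ x ∈ Finset.range n, phiD n j (x+1) * phiD n j' (x+1) * a (x+1) := by
    rw [show Finset.Icc 1 n = Finset.Ico 1 (n+1) from rfl, Finset.sum_Ico_eq_sum_range]
    simp [add_comm 1]
  rw [e1, e2, e3, ← Finset.sum_sub_distrib, Finset.mul_sum]
  refine Finset.sum_congr rfl fun x _ => ?_
  have h1 := psi_diff n j x
  have h2 := psi_diff n j' x
  have key : psiN n j (x+1) * psiN n j' (x+1) + psiN n j x * psiN n j' x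
        - (psiN n j x * psiN n j' (x+1) + psiN n j (x+1) * psiN n j' x)
      = gam n j * gam n j' * (phiD n j (x+1) * phiD n j' (x+1)) := by
    linear_combination (psiN n j' (x+1) - psiN n j' x) * h1 + (- gam n j * phiD n j (x+1)) * h2
  linear_combination a (x+1) * key
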